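/- Let N be a power of 2 and let b be a power of 2 with N ≥ 2b. Every N × N butterfly matrix (i.e., block butterfly matrix with block size 1) is also an N × N block butterfly matrix with block size b. -/

import Mathlib

/-- A matrix `M` of size `N × N` (thought of as `n·b × n·b`) is a *block butterfly factor
matrix* of stride `k` and block size `b` if its support is contained in the block-diagonal
pattern of `n/k` block butterfly factors of size `k·b`: the `b`-block indices `⌊i/b⌋` and
`⌊j/b⌋` of any nonzero entry must lie in the same size-`k` group and agree modulo `k/2`. -/
def IsBFactorMatrix {N : ℕ} (k b : ℕ) (M : Matrix (Fin N) (Fin N) ℝ) : Prop :=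
  ∀ i j : Fin N, M i j ≠ 0 →
    ((i : ℕ) / b) / k = ((j : ℕ) / b) / k ∧
    ((i : ℕ) / b) % (k / 2) = ((j : ℕ) / b) % (k / 2)

/-- `M` is a block butterfly matrix with `n = 2^s` diagonal blocks of block size `b`:
a product `B_n^{(n,b)} B_{n/2}^{(n,b)} ⋯ B_2^{(n,b)}` of block butterfly factor matrices
with strides `2^s, 2^{s-1}, …, 2`. -/
def IsBlockButterfly {N : ℕ} (s b : ℕ) (M : Matrix (Fin N) (Fin N) ℝ) : Prop :=
  ∃ F : Fin s → Matrix (Fin N) (Fin N) ℝ,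
    (∀ i : Fin s, IsBFactorMatrix (2 ^ (s - (i : ℕ))) b (F i)) ∧
    M = (List.ofFn F).prod

lemma isBFactor_one {N k b : ℕ} : IsBFactorMatrix k b (1 : Matrix (Fin N) (Fin N) ℝ) := by
  intro i j hij
  have hij' : i = j := by
    by_contra hc
    exact hij (Matrix.one_apply_ne hc)
  subst hij'
  exact ⟨rfl, rfl⟩

lemma isBFactor_mul {N k b : ℕ} {A B : Matrix (Fin N) (Fin N) ℝ}
    (hA : IsBFactorMatrix k b A) (hB : IsBFactorMatrix k b B) :
    IsBFactorMatrix k b (A * B) := by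
  intro i j hij
  rw [Matrix.mul_apply] at hij
  obtain ⟨m, -, hm⟩ := Finset.exists_ne_zero_of_sum_ne_zero hij
  obtain ⟨h1, h2⟩ := hA i m (left_ne_zero_of_mul hm)
  obtain ⟨h3, h4⟩ := hB m j (right_ne_zero_of_mul hm)
  exact ⟨h1.trans h3, h2.trans h4⟩

lemma isBFactor_prod {N k b : ℕ} (L : List (Matrix (Fin N) (Fin N) ℝ))
    (hL : ∀ A ∈ L, IsBFactorMatrix k b A) : IsBFactorMatrix k b L.prod := by
  induction L with
  | nil => simpa using (isBFactor_one : IsBFactorMatrix k b (1 : Matrix (Fin N) (Fin N) ℝ))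
  | cons A L ih =>
    rw [List.prod_cons]
    exact isBFactor_mul (hL A (List.mem_cons_self))
      (ih fun B hB => hL B (List.mem_cons_of_mem _ hB))

lemma ofFn_concat {α : Type*} {s : ℕ} (hs : 0 < s) (G : Fin s → α) :
    List.ofFn G = List.ofFn (fun j : Fin (s - 1) => G ⟨j, by omega⟩) ++ [G ⟨s - 1, by omega⟩] := by
  apply List.ext_getElem
  · simp; omega
  · intro n h1 h2
    simp only [List.getElem_ofFn, List.getElem_append, List.length_ofFn]
    split_ifs with hn
    · simp
    · have hn' : n = s - 1 := by simp at h1; omega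
      subst hn'
      simp

lemma take_ofFn' {α : Type*} {n : ℕ} (f : Fin n → α) (m : ℕ) (h : m ≤ n) :
    (List.ofFn f).take m = List.ofFn (fun j : Fin m => f ⟨j, by omega⟩) := by
  apply List.ext_getElem
  · simp; omega
  · intro i h1 h2
    simp

lemma drop_ofFn' {α : Type*} {n : ℕ} (f : Fin n → α) (m : ℕ) (h : m ≤ n) :
    (List.ofFn f).drop m = List.ofFn (fun j : Fin (n - m) => f ⟨m + j, by omega⟩) := by
  apply List.ext_getElem
  · simp
  · intro i h1 h2
    simp [List.getElem_drop]

lemma pow2_div_two (m : ℕ) (hm : 1 ≤ m) : 2 ^ m / 2 = 2 ^ (m - 1) := by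
  have : 2 ^ m = 2 ^ (m - 1) * 2 := by
    rw [← pow_succ]
    congr 1
    omega
  rw [this, Nat.mul_div_cancel _ (by norm_num)]

/-- Let `N = 2^p` and `b = 2^q` be powers of two with `N ≥ 2b`
(i.e. `q + 1 ≤ p`). Every `N × N` butterfly matrix (block butterfly of block size 1,
with `N = 2^p` blocks) is also an `N × N` block butterfly matrix with block size `b`
(with `N/b = 2^{p-q}` blocks). -/
theorem butterfly_is_block_butterfly (p q : ℕ) (hpq : q + 1 ≤ p)
    (M : Matrix (Fin (2 ^ p)) (Fin (2 ^ p)) ℝ)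
    (h : IsBlockButterfly p 1 M) :
    IsBlockButterfly (p - q) (2 ^ q) M := by
  obtain ⟨F, hF, hM⟩ := h
  set s := p - q with hsdef
  have hs1 : 1 ≤ s := by omega
  refine ⟨fun j => if hj : (j : ℕ) + 1 < s then F ⟨j, by omega⟩
      else ((List.ofFn F).drop (s - 1)).prod, ?_, ?_⟩
  · intro j
    by_cases hj : (j : ℕ) + 1 < s
    · simp only [dif_pos hj]
      intro i i' hne
      obtain ⟨h1, h2⟩ := hF ⟨j, by omega⟩ i i' hne
      simp only [Nat.div_one] at h1 h2
      constructor
      · rw [Nat.div_div_eq_div_mul, Nat.div_div_eq_div_mul, ← pow_add]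
        have e : q + (s - (j : ℕ)) = p - (j : ℕ) := by omega
        rw [e]
        exact h1
      · have e1 : 2 ^ (s - (j : ℕ)) / 2 = 2 ^ (s - (j : ℕ) - 1) :=
          pow2_div_two _ (by omega)
        have e2 : 2 ^ (p - (j : ℕ)) / 2 = 2 ^ (p - (j : ℕ) - 1) :=
          pow2_div_two _ (by omega)
        rw [e2] at h2
        rw [e1, ← Nat.mod_mul_right_div_self, ← Nat.mod_mul_right_div_self, ← pow_add]
        have e3 : q + (s - (j : ℕ) - 1) = p - (j : ℕ) - 1 := by omega
        rw [e3, h2]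
    · simp only [dif_neg hj]
      have hj' : (j : ℕ) = s - 1 := by have := j.2; omega
      have hstride : s - (j : ℕ) = 1 := by omega
      rw [hstride]
      apply isBFactor_prod
      intro A hA
      rw [drop_ofFn' F (s - 1) (by omega)] at hA
      rw [List.mem_ofFn] at hA
      obtain ⟨t, rfl⟩ := hA
      set i0 : ℕ := s - 1 + (t : ℕ) with hi0
      have hi0p : i0 < p := by have := t.2; omega
      have hi0q : p - i0 ≤ q + 1 := by omega
      have hi0q' : 1 ≤ p - i0 := by omega
      intro i i' hne
      obtain ⟨h1, h2⟩ := hF ⟨i0, hi0p⟩ i i' hne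
      simp only [Nat.div_one] at h1 h2
      constructor
      · rw [Nat.div_div_eq_div_mul, Nat.div_div_eq_div_mul]
        have e : 2 ^ q * 2 ^ 1 = 2 ^ (p - i0) * 2 ^ (q + 1 - (p - i0)) := by
          rw [← pow_add, ← pow_add]
          congr 1
          omega
        rw [e, ← Nat.div_div_eq_div_mul, ← Nat.div_div_eq_div_mul, h1]
      · simp [Nat.mod_one]
  · rw [hM]
    rw [ofFn_concat (by omega : 0 < s)]
    rw [List.prod_append, List.prod_singleton]
    simp only [dif_neg (by omega : ¬ (s - 1 + 1 < s))]
    have hdite : ∀ j : Fin (s - 1),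
        (if hj : (j : ℕ) + 1 < s then F ⟨j, by omega⟩
          else ((List.ofFn F).drop (s - 1)).prod) = F ⟨j, by omega⟩ := by
      intro j
      rw [dif_pos (by omega : (j : ℕ) + 1 < s)]
    conv_lhs => rw [← List.prod_take_mul_prod_drop (List.ofFn F) (s - 1)]
    congr 1
    rw [take_ofFn' F (s - 1) (by omega)]
    exact congrArg List.prod (congrArg List.ofFn (funext fun j => (hdite j).symm))
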